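/- arXiv:2201.09545 — 3 statements merged into one kernel-verified Lean document; each statement's English description precedes it below -/
import Mathlib

section
/- Let κ ≥ 2 be an integer and x, y real numbers with U_{κ-1}(x) ≠ 0 and U_{κ-1}(y) ≠ 0. Then T_κ(x) = T_κ(y) if and only if for all positive integers α, β one has U_{ακ-1}(x)·U_{βκ-1}(y) = U_{ακ-1}(y)·U_{βκ-1}(x). -/
open Polynomial Polynomial.Chebyshev

theorem aux_mul_T_U (R : Type*) [CommRing R] (m k : ℤ) :
    2 * T R m * U R k = U R (k + m) + U R (k - m) := by
  induction m using Polynomial.Chebyshev.induct with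
  | zero => simp [two_mul]
  | one => rw [T_one, U_add_one]; ring
  | add_two m ih1 ih2 =>
    have h₁ := U_add_two R (k + m)
    have h₂ := U_sub_two R (k - m)
    have h₃ := T_add_two R m
    linear_combination (norm := ring_nf) 2 * U R k * h₃ - h₂ - h₁ - ih2 + 2 * (X : R[X]) * ih1
  | neg_add_one m ih1 ih2 =>
    have h₁ := U_add_two R (k + (-m - 1))
    have h₂ := U_sub_two R (k - (-m - 1))
    have h₃ := T_add_two R (-m - 1)
    linear_combination (norm := ring_nf) 2 * U R k * h₃ - h₂ - h₁ - ih2 + 2 * (X : R[X]) * ih1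

theorem aux_U_mul (R : Type*) [CommRing R] (κ : ℤ) : ∀ n : ℤ,
    U R (n * κ - 1) = (U R (n - 1)).comp (T R κ) * U R (κ - 1) := by
  intro n
  induction n using Polynomial.Chebyshev.induct with
  | zero => simp
  | one => simp
  | add_two n ih1 ih2 =>
    have h₁ := aux_mul_T_U R κ ((n + 1) * κ - 1)
    have h₂ := congr_arg (comp · (T R κ)) <| U_add_two R (n - 1)
    simp only [sub_comp, mul_comp, ofNat_comp, X_comp] at h₂
    linear_combination (norm := ring_nf) -h₁ + 2 * T R κ * ih1 - ih2 - U R (κ - 1) * h₂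
  | neg_add_one n ih1 ih2 =>
    have h₁ := aux_mul_T_U R κ (-n * κ - 1)
    have h₂ := congr_arg (comp · (T R κ)) <| U_add_two R (-n - 2)
    simp only [sub_comp, mul_comp, ofNat_comp, X_comp] at h₂
    linear_combination (norm := ring_nf) -h₁ + 2 * T R κ * ih1 - ih2 - U R (κ - 1) * h₂

/-- For `κ ≥ 2` and real `x, y` with `U_{κ-1}(x) ≠ 0 ≠ U_{κ-1}(y)`,
`T_κ(x) = T_κ(y)` iff `U_{ακ-1}(x)·U_{βκ-1}(y) = U_{ακ-1}(y)·U_{βκ-1}(x)`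
for all positive integers `α, β`. -/
theorem chebyshev_T_eq_iff_U_comm (κ : ℕ) (hκ : 2 ≤ κ) (x y : ℝ)
    (hx : (U ℝ ((κ : ℤ) - 1)).eval x ≠ 0) (hy : (U ℝ ((κ : ℤ) - 1)).eval y ≠ 0) :
    (T ℝ κ).eval x = (T ℝ κ).eval y ↔
      ∀ α β : ℕ, 0 < α → 0 < β →
        (U ℝ ((α * κ : ℕ) - 1 : ℤ)).eval x * (U ℝ ((β * κ : ℕ) - 1 : ℤ)).eval y =
          (U ℝ ((α * κ : ℕ) - 1 : ℤ)).eval y * (U ℝ ((β * κ : ℕ) - 1 : ℤ)).eval x := by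
  have key : ∀ (n : ℤ) (z : ℝ), (U ℝ (n * κ - 1)).eval z
      = (U ℝ (n - 1)).eval ((T ℝ κ).eval z) * (U ℝ ((κ : ℤ) - 1)).eval z := by
    intro n z
    have := congr_arg (eval z) (aux_U_mul ℝ κ n)
    simpa [eval_comp] using this
  constructor
  · intro h α β hα hβ
    have hα' : ((α * κ : ℕ) : ℤ) - 1 = (α : ℤ) * κ - 1 := by push_cast; ring
    have hβ' : ((β * κ : ℕ) : ℤ) - 1 = (β : ℤ) * κ - 1 := by push_cast; ring
    rw [hα', hβ', key, key, key, key, h]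
    ring
  · intro h
    have h21 := h 2 1 (by norm_num) (by norm_num)
    have e2 : ((2 * κ : ℕ) : ℤ) - 1 = (2 : ℤ) * κ - 1 := by push_cast; ring
    have e1 : ((1 * κ : ℕ) : ℤ) - 1 = (1 : ℤ) * κ - 1 := by push_cast; ring
    rw [e2, e1, key, key, key, key] at h21
    have h1 : ∀ z : ℝ, (U ℝ ((2:ℤ) - 1)).eval z = 2 * z := by
      intro z; norm_num [U_one]
    have h0 : ∀ z : ℝ, (U ℝ ((1:ℤ) - 1)).eval z = 1 := by intro z; norm_num
    rw [h1, h1, h0, h0] at h21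
    have hz : ((T ℝ κ).eval x - (T ℝ κ).eval y)
        * (2 * (U ℝ ((κ : ℤ) - 1)).eval x * (U ℝ ((κ : ℤ) - 1)).eval y) = 0 := by
      linear_combination h21
    rcases mul_eq_zero.mp hz with h' | h'
    · linarith [sub_eq_zero.mp h']
    · exact absurd h' (by positivity)
end

section
/- Let κ ≥ 2 be an integer and x, y ∈ [-1,1]. Then the equality U_{ακ-1}(x)·U_{βκ-1}(y) = U_{ακ-1}(y)·U_{βκ-1}(x) holds for all positive integers α, β if and only if U_{κ-1}(x) = 0, or U_{κ-1}(y) = 0, or T_κ(x) = T_κ(y). -/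
open Polynomial Polynomial.Chebyshev Set

/-- Key identity: `U_{ακ-1} = (U_{α-1} ∘ T_κ) · U_{κ-1}` as real polynomials. -/
lemma chebyshev_U_mul_key (α κ : ℕ) :
    U ℝ ((α * κ : ℕ) - 1 : ℤ) =
      ((U ℝ ((α : ℤ) - 1)).comp (T ℝ (κ : ℤ))) * U ℝ ((κ : ℤ) - 1) := by
  apply eq_of_infinite_eval_eq
  refine (Set.Ioo_infinite (by norm_num : (-1:ℝ) < 1)).mono ?_
  intro x hx
  simp only [Set.mem_setOf_eq]
  set θ := Real.arccos x with hθ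
  have hxθ : Real.cos θ = x := Real.cos_arccos hx.1.le hx.2.le
  have hs : 0 < Real.sin θ := by
    rw [hθ, Real.sin_arccos]
    have : x ^ 2 < 1 := by nlinarith [hx.1, hx.2]
    exact Real.sqrt_pos.mpr (by nlinarith)
  apply mul_right_cancel₀ hs.ne'
  rw [← hxθ]
  rw [U_real_cos, eval_mul, eval_comp, T_real_cos, mul_assoc, U_real_cos]
  have h2 : (U ℝ ((α : ℤ) - 1)).eval (Real.cos ((κ : ℝ) * θ)) * Real.sin ((κ:ℝ) * θ)
      = Real.sin ((((α:ℤ) - 1 : ℤ) + 1 : ℝ) * ((κ:ℝ) * θ)) := U_real_cos _ _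
  push_cast at h2 ⊢
  rw [show ((α:ℝ) - 1 + 1) * ((κ:ℝ) * θ) = (α * κ - 1 + 1) * θ by ring] at h2
  rw [show ((κ:ℝ) - 1 + 1) * θ = (κ:ℝ) * θ by ring, h2]

/-- For `κ ≥ 2` and `x, y ∈ [-1,1]`:
`U_{ακ-1}(x)·U_{βκ-1}(y) = U_{ακ-1}(y)·U_{βκ-1}(x)` holds for all positive
integers `α, β` iff `U_{κ-1}(x) = 0`, or `U_{κ-1}(y) = 0`, or `T_κ(x) = T_κ(y)`. -/
theorem chebyshev_U_comm_iff (κ : ℕ) (hκ : 2 ≤ κ) (x y : ℝ)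
    (hx : x ∈ Icc (-1 : ℝ) 1) (hy : y ∈ Icc (-1 : ℝ) 1) :
    (∀ α β : ℕ, 0 < α → 0 < β →
        (U ℝ ((α * κ : ℕ) - 1 : ℤ)).eval x * (U ℝ ((β * κ : ℕ) - 1 : ℤ)).eval y =
          (U ℝ ((α * κ : ℕ) - 1 : ℤ)).eval y * (U ℝ ((β * κ : ℕ) - 1 : ℤ)).eval x) ↔
      (U ℝ ((κ : ℤ) - 1)).eval x = 0 ∨ (U ℝ ((κ : ℤ) - 1)).eval y = 0 ∨
        (T ℝ κ).eval x = (T ℝ κ).eval y := by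
  constructor
  · intro h
    by_cases hA : (U ℝ ((κ : ℤ) - 1)).eval x = 0
    · exact Or.inl hA
    by_cases hB : (U ℝ ((κ : ℤ) - 1)).eval y = 0
    · exact Or.inr (Or.inl hB)
    refine Or.inr (Or.inr ?_)
    have h21 := h 2 1 (by norm_num) (by norm_num)
    rw [chebyshev_U_mul_key 2 κ, chebyshev_U_mul_key 1 κ] at h21
    simp only [eval_mul, eval_comp, show ((2:ℕ):ℤ) - 1 = 1 by norm_num,
      show ((1:ℕ):ℤ) - 1 = 0 by norm_num, U_one, U_zero, eval_one, eval_mul,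
      eval_ofNat, eval_X] at h21
    have hxy : (T ℝ (κ:ℤ)).eval x * ((U ℝ ((κ:ℤ)-1)).eval x * (U ℝ ((κ:ℤ)-1)).eval y)
        = (T ℝ (κ:ℤ)).eval y * ((U ℝ ((κ:ℤ)-1)).eval x * (U ℝ ((κ:ℤ)-1)).eval y) := by
      linear_combination h21 / 2
    exact mul_right_cancel₀ (mul_ne_zero hA hB) hxy
  · rintro (hA | hB | hT) α β hα hβ <;>
      rw [chebyshev_U_mul_key α κ, chebyshev_U_mul_key β κ]
    · simp only [eval_mul, eval_comp, hA]; ring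
    · simp only [eval_mul, eval_comp, hB]; ring
    · simp only [eval_mul, eval_comp, hT]; ring
end

section
/- For κ = 2 and E ∈ (2/3, 1), the polynomial G(x) := (1-x²)U_1(x) + (1-(E-x)²)U_1(E-x) + (9/14)·[(1-x²)U_3(x) + (1-(E-x)²)U_3(E-x)] is strictly positive for all x ∈ [E-1, 1], where U_1(x) = 2x and U_3(x) = 8x³ - 4x are Chebyshev polynomials of the second kind. -/
open Polynomial Polynomial.Chebyshev Set

/-- Mourre estimate for `κ = 2`, `d = 2` on the band `(2/3, 1)`: the function
`G(x) = (1-x²)U₁(x) + (1-(E-x)²)U₁(E-x) + (9/14)[(1-x²)U₃(x) + (1-(E-x)²)U₃(E-x)]`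
is strictly positive on `[E-1, 1]` for every `E ∈ (2/3, 1)`. -/
theorem mourre_band_kappa_two (E : ℝ) (hE : E ∈ Ioo (2 / 3 : ℝ) 1) (x : ℝ)
    (hx : x ∈ Icc (E - 1) 1) :
    0 < (1 - x ^ 2) * (U ℝ 1).eval x + (1 - (E - x) ^ 2) * (U ℝ 1).eval (E - x) +
        (9 / 14) * ((1 - x ^ 2) * (U ℝ 3).eval x +
          (1 - (E - x) ^ 2) * (U ℝ 3).eval (E - x)) := by
  obtain ⟨hE1, hE2⟩ := hE
  obtain ⟨hx1, hx2⟩ := hx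
  have hU1 : ∀ t : ℝ, (U ℝ 1).eval t = 2 * t := by intro t; simp [U_one]
  have hU3 : ∀ t : ℝ, (U ℝ 3).eval t = 8 * t ^ 3 - 4 * t := by
    intro t
    have h3 : U ℝ 3 = U ℝ (2 + 1) := by norm_num
    rw [h3, U_add_one, U_two]
    norm_num [U_one]; ring
  rw [hU1, hU1, hU3, hU3]
  have ha : (0:ℝ) ≤ 1 - x := by linarith
  have hb : (0:ℝ) ≤ x - E + 1 := by linarith
  have hc : (0:ℝ) < E - 2/3 := by linarith
  have hd : (0:ℝ) < 1 - E := by linarith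
  have h1 : (0:ℝ) ≤ (1-x)^2 * ((E-2/3)^2 * (1-E)) :=
    mul_nonneg (sq_nonneg _) (mul_nonneg (sq_nonneg _) hd.le)
  have h2 : (0:ℝ) ≤ (1-x) * ((x-E+1) * ((E-2/3) * (x+1/3)^2)) :=
    mul_nonneg ha (mul_nonneg hb (mul_nonneg hc.le (sq_nonneg _)))
  have h3 : (0:ℝ) ≤ (1-x) * ((x-E+1)^2 * (E-2/3)^2) :=
    mul_nonneg ha (mul_nonneg (sq_nonneg _) (sq_nonneg _))
  have h4 : (0:ℝ) ≤ (1-x) * ((x-E+1) * (x-E/2)^2) :=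
    mul_nonneg ha (mul_nonneg hb (sq_nonneg _))
  have h5 : (0:ℝ) ≤ (x-E+1) * ((E-2/3) * ((1-E) * (x+1/3)^2)) :=
    mul_nonneg hb (mul_nonneg hc.le (mul_nonneg hd.le (sq_nonneg _)))
  have h6 : (0:ℝ) ≤ (x-E+1)^2 * ((E-2/3)^2 * (1-E)) :=
    mul_nonneg (sq_nonneg _) (mul_nonneg (sq_nonneg _) hd.le)
  have h7 : (0:ℝ) ≤ (1-x)^2 * ((x-E+1) * (E-2/3)^2) :=
    mul_nonneg (sq_nonneg _) (mul_nonneg hb (sq_nonneg _))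
  have h8 : (0:ℝ) ≤ (1-x)^3 * ((E-2/3) * (1-E)) :=
    mul_nonneg (pow_nonneg ha 3) (mul_nonneg hc.le hd.le)
  have h9 : (0:ℝ) ≤ (1-x) * ((x-E+1) * ((E-2/3) * (x-E/2)^2)) :=
    mul_nonneg ha (mul_nonneg hb (mul_nonneg hc.le (sq_nonneg _)))
  have h10 : (0:ℝ) ≤ (1-x) * ((x-E+1) * (E-2/3)^3) :=
    mul_nonneg ha (mul_nonneg hb (pow_nonneg hc.le 3))
  have h11 : (0:ℝ) ≤ (E-2/3) * ((1-E)^2 * (x+1/3)^2) :=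
    mul_nonneg hc.le (mul_nonneg (sq_nonneg _) (sq_nonneg _))
  have h12 : (0:ℝ) < (E-2/3)^4 * (1-E) := mul_pos (pow_pos hc 4) hd
  have h13 : (0:ℝ) ≤ (1-x) * ((E-2/3)^2 * (1-E)^2) :=
    mul_nonneg ha (mul_nonneg (sq_nonneg _) (sq_nonneg _))
  have h14 : (0:ℝ) ≤ (1-x)^3 * ((x-E+1) * (E-2/3)) :=
    mul_nonneg (pow_nonneg ha 3) (mul_nonneg hb hc.le)
  linarith [h1, h2, h3, h4, h5, h6, h7, h8, h9, h10, h11, h12, h13, h14]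
end
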